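/- arXiv:0904.1968 — 2 statements merged into one kernel-verified Lean document; each statement's English description precedes it below -/
import Mathlib

section
/- Let p be an odd prime, let r ≥ 2 be an integer, and let n = 2^r·p. Define A = {1 + i·2^r : 0 ≤ i ≤ (p−1)/2} ∪ {1 + j·2^r + n/2 : 1 ≤ j ≤ (p−1)/2} and B = {1 − i·2^r : 0 ≤ i ≤ (p−1)/2} ∪ {1 − j·2^r + n/2 : 1 ≤ j ≤ (p−1)/2} as subsets of ℤ/nℤ. Then every element of A ∪ B is odd; there is a unique integer ℓ with 0 < ℓ < p and p ∣ 1 + ℓ·2^r; the two residues 1 + ℓ·2^r and 1 + ℓ·2^r + n/2 are the only elements of A ∪ B divisible by p, and they both lie in the same one of the two sets A, B; and every other element of A ∪ B is coprime to n. In particular, one of the sets A, B consists entirely of residues coprime to n, while the other contains exactly two residues divisible by p. -/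
/-- The connection set `A` in `ℤ/nℤ`, `n = 2^r·p`. -/
def connA (n r p : ℕ) : Finset (ZMod n) :=
  ((Finset.range ((p - 1) / 2 + 1)).image fun i => ((1 + i * 2 ^ r : ℕ) : ZMod n)) ∪
  ((Finset.Icc 1 ((p - 1) / 2)).image fun j => ((1 + j * 2 ^ r + n / 2 : ℕ) : ZMod n))

/-- The connection set `B` in `ℤ/nℤ`, `n = 2^r·p`. -/
def connB (n r p : ℕ) : Finset (ZMod n) :=
  ((Finset.range ((p - 1) / 2 + 1)).image fun i => (1 - (i * 2 ^ r : ℕ) : ZMod n)) ∪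
  ((Finset.Icc 1 ((p - 1) / 2)).image fun j =>
    (1 - (j * 2 ^ r : ℕ) + (n / 2 : ℕ) : ZMod n))



section ConnHelpers

variable {p r n : ℕ}

private lemma half_eq (hr : 2 ≤ r) (hn : n = 2 ^ r * p) : n / 2 = 2 ^ (r - 1) * p := by
  subst hn
  have h : 2 ^ r = 2 * 2 ^ (r - 1) := by
    conv_lhs => rw [show r = (r - 1) + 1 by omega]
    rw [pow_succ']
  rw [h, mul_assoc, Nat.mul_div_cancel_left _ two_pos]

private lemma p_dvd_half (hr : 2 ≤ r) (hn : n = 2 ^ r * p) : p ∣ n / 2 := by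
  rw [half_eq hr hn]; exact dvd_mul_left p _

private lemma two_dvd_half (hr : 2 ≤ r) (hn : n = 2 ^ r * p) : 2 ∣ n / 2 := by
  rw [half_eq hr hn]
  exact Dvd.dvd.mul_right (dvd_pow_self 2 (by omega)) p

private lemma val_dvd_iff [NeZero n] (hn : n = 2 ^ r * p) (a : ℕ) :
    p ∣ ((a : ZMod n)).val ↔ p ∣ a := by
  rw [ZMod.val_natCast]
  exact Nat.dvd_mod_iff ⟨2 ^ r, by rw [hn, mul_comm]⟩

private lemma val_odd_iff [NeZero n] (hr : 2 ≤ r) (hn : n = 2 ^ r * p) (a : ℕ) :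
    Odd ((a : ZMod n)).val ↔ Odd a := by
  rw [ZMod.val_natCast, Nat.odd_iff, Nat.odd_iff]
  have h2 : (2 : ℕ) ∣ n := by
    rw [hn]; exact Dvd.dvd.mul_right (dvd_pow_self 2 (by omega)) p
  have := Nat.dvd_mod_iff (m := a) h2
  omega

private lemma val_coprime_iff [NeZero n] (a : ℕ) :
    Nat.Coprime ((a : ZMod n)).val n ↔ Nat.Coprime a n := by
  rw [ZMod.val_natCast]
  unfold Nat.Coprime
  rw [← Nat.gcd_rec, Nat.gcd_comm]

private lemma coprime_iff (hp : p.Prime) (hr : 2 ≤ r) (hn : n = 2 ^ r * p) (a : ℕ) :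
    Nat.Coprime a n ↔ Odd a ∧ ¬ p ∣ a := by
  subst hn
  have e2 : a.Coprime 2 ↔ Odd a := by
    rw [Nat.coprime_comm, Nat.prime_two.coprime_iff_not_dvd, Nat.odd_iff]
    omega
  have ep : a.Coprime p ↔ ¬ p ∣ a := by
    rw [Nat.coprime_comm]; exact hp.coprime_iff_not_dvd
  rw [Nat.coprime_mul_iff_right, Nat.coprime_pow_right_iff (show 0 < r by omega), e2, ep]

private lemma cast_eq_iff (hn : n = 2 ^ r * p) (k k' : ℕ) :
    ((1 + k * 2 ^ r : ℕ) : ZMod n) = ((1 + k' * 2 ^ r : ℕ) : ZMod n) ↔ k ≡ k' [MOD p] := by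
  rw [ZMod.natCast_eq_natCast_iff, hn]
  constructor
  · intro h
    have h1 := Nat.ModEq.add_left_cancel' 1 h
    have h2 : 2 ^ r * k ≡ 2 ^ r * k' [MOD 2 ^ r * p] := by
      rwa [mul_comm k, mul_comm k'] at h1
    exact Nat.ModEq.mul_left_cancel' (by positivity) h2
  · intro h
    have h2 := Nat.ModEq.mul_left' (c := 2 ^ r) h
    have h3 : k * 2 ^ r ≡ k' * 2 ^ r [MOD 2 ^ r * p] := by
      rwa [mul_comm (2 ^ r) k, mul_comm (2 ^ r) k'] at h2
    exact Nat.ModEq.add_left 1 h3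

private lemma cast_ne (hodd : Odd p) (hr : 2 ≤ r) (hn : n = 2 ^ r * p) (k k' : ℕ) :
    ((1 + k * 2 ^ r : ℕ) : ZMod n) ≠ ((1 + k' * 2 ^ r + n / 2 : ℕ) : ZMod n) := by
  intro h
  rw [ZMod.natCast_eq_natCast_iff] at h
  have h2 : (1 + k * 2 ^ r) ≡ (1 + k' * 2 ^ r + n / 2) [MOD 2 ^ r] :=
    h.of_dvd (by rw [hn]; exact Dvd.intro _ rfl)
  have e1 : (1 + k * 2 ^ r) % 2 ^ r = 1 % 2 ^ r := Nat.add_mul_mod_self_right 1 k (2 ^ r)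
  have e2 : (1 + k' * 2 ^ r + n / 2) % 2 ^ r = (1 + n / 2) % 2 ^ r := by
    rw [show 1 + k' * 2 ^ r + n / 2 = 1 + n / 2 + k' * 2 ^ r by ring,
      Nat.add_mul_mod_self_right]
  rw [Nat.ModEq, e1, e2] at h2
  have h3 : 2 ^ r ∣ n / 2 := by
    have h4 : (1 : ℕ) ≡ 1 + n / 2 [MOD 2 ^ r] := h2
    have := (Nat.modEq_iff_dvd' (by omega)).1 h4
    simpa using this
  rw [half_eq hr hn] at h3
  have h4 : (2 : ℕ) ^ (r - 1) * 2 ∣ 2 ^ (r - 1) * p := by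
    have : (2 : ℕ) ^ (r - 1) * 2 = 2 ^ r := by
      rw [← pow_succ, show r - 1 + 1 = r by omega]
    rwa [this]
  have h5 : (2 : ℕ) ∣ p := (mul_dvd_mul_iff_left (show (2:ℕ) ^ (r-1) ≠ 0 by positivity)).1 h4
  rw [Nat.odd_iff] at hodd
  omega

private lemma cast_eq_iff2 (hn : n = 2 ^ r * p) (k k' : ℕ) :
    ((1 + k * 2 ^ r + n / 2 : ℕ) : ZMod n) = ((1 + k' * 2 ^ r + n / 2 : ℕ) : ZMod n) ↔
      k ≡ k' [MOD p] := by
  rw [ZMod.natCast_eq_natCast_iff, ← cast_eq_iff hn k k', ZMod.natCast_eq_natCast_iff]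
  constructor
  · exact fun h => Nat.ModEq.add_right_cancel' _ h
  · exact fun h => Nat.ModEq.add_right _ h

private lemma subcast (hn : n = 2 ^ r * p) {i : ℕ} (hi : i ≤ p) :
    (1 - ((i * 2 ^ r : ℕ) : ZMod n)) = ((1 + (p - i) * 2 ^ r : ℕ) : ZMod n) := by
  have hp0 : (p : ZMod n) * 2 ^ r = 0 := by
    have h : ((2 ^ r * p : ℕ) : ZMod n) = 0 := by rw [← hn]; exact ZMod.natCast_self n
    push_cast at h
    linear_combination h
  have : ((1 + (p - i) * 2 ^ r : ℕ) : ZMod n) = 1 + ((p : ZMod n) - i) * 2 ^ r := by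
    push_cast [hi]
    ring
  rw [this]
  push_cast
  linear_combination (-1 : ZMod n) * hp0

private lemma memA_iff [NeZero n] (x : ZMod n) :
    x ∈ connA n r p ↔
      (∃ i, i ≤ (p - 1) / 2 ∧ x = ((1 + i * 2 ^ r : ℕ) : ZMod n)) ∨
      (∃ j, 1 ≤ j ∧ j ≤ (p - 1) / 2 ∧ x = ((1 + j * 2 ^ r + n / 2 : ℕ) : ZMod n)) := by
  simp only [connA, Finset.mem_union, Finset.mem_image, Finset.mem_range, Finset.mem_Icc,
    Nat.lt_succ_iff]
  constructor
  · rintro (⟨i, hi, hx⟩ | ⟨j, ⟨hj1, hj2⟩, hx⟩)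
    · exact Or.inl ⟨i, hi, hx.symm⟩
    · exact Or.inr ⟨j, hj1, hj2, hx.symm⟩
  · rintro (⟨i, hi, hx⟩ | ⟨j, hj1, hj2, hx⟩)
    · exact Or.inl ⟨i, hi, hx.symm⟩
    · exact Or.inr ⟨j, ⟨hj1, hj2⟩, hx.symm⟩

private lemma memB_iff [NeZero n] (hr : 2 ≤ r) (hn : n = 2 ^ r * p) (x : ZMod n) :
    x ∈ connB n r p ↔
      (∃ i, i ≤ (p - 1) / 2 ∧ x = ((1 + (p - i) * 2 ^ r : ℕ) : ZMod n)) ∨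
      (∃ j, 1 ≤ j ∧ j ≤ (p - 1) / 2 ∧ x = ((1 + (p - j) * 2 ^ r + n / 2 : ℕ) : ZMod n)) := by
  have key : ∀ i : ℕ, i ≤ (p - 1) / 2 →
      (1 - ((i * 2 ^ r : ℕ) : ZMod n)) = ((1 + (p - i) * 2 ^ r : ℕ) : ZMod n) := by
    intro i hi
    exact subcast hn (by omega)
  have key2 : ∀ j : ℕ, j ≤ (p - 1) / 2 →
      (1 - ((j * 2 ^ r : ℕ) : ZMod n) + ((n / 2 : ℕ) : ZMod n)) =
        ((1 + (p - j) * 2 ^ r + n / 2 : ℕ) : ZMod n) := by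
    intro j hj
    rw [key j hj]
    exact (Nat.cast_add _ _).symm
  simp only [connB, Finset.mem_union, Finset.mem_image, Finset.mem_range, Finset.mem_Icc,
    Nat.lt_succ_iff]
  constructor
  · rintro (⟨i, hi, hx⟩ | ⟨j, ⟨hj1, hj2⟩, hx⟩)
    · exact Or.inl ⟨i, hi, by rw [← hx, key i hi]⟩
    · exact Or.inr ⟨j, hj1, hj2, by rw [← hx, key2 j hj2]⟩
  · rintro (⟨i, hi, hx⟩ | ⟨j, hj1, hj2, hx⟩)
    · exact Or.inl ⟨i, hi, by rw [hx, key i hi]⟩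
    · exact Or.inr ⟨j, ⟨hj1, hj2⟩, by rw [hx, key2 j hj2]⟩

private lemma dvd_iff_modeq (hp : p.Prime) (hodd : Odd p) {ℓ : ℕ}
    (hd : p ∣ 1 + ℓ * 2 ^ r) (k : ℕ) :
    p ∣ 1 + k * 2 ^ r ↔ k ≡ ℓ [MOD p] := by
  have hp2 : ¬ (p ∣ 2) := by
    intro h
    have h1 := Nat.le_of_dvd (by norm_num) h
    have h2 := hp.two_le
    rw [Nat.odd_iff] at hodd
    omega
  have hcop : Nat.gcd p (2 ^ r) = 1 :=
    hp.coprime_iff_not_dvd.2 (fun h => hp2 (hp.dvd_of_dvd_pow h))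
  constructor
  · intro hk
    have h1 : 1 + k * 2 ^ r ≡ 1 + ℓ * 2 ^ r [MOD p] :=
      (Nat.modEq_zero_iff_dvd.2 hk).trans (Nat.modEq_zero_iff_dvd.2 hd).symm
    have h2 := Nat.ModEq.add_left_cancel' 1 h1
    have h3 : 2 ^ r * k ≡ 2 ^ r * ℓ [MOD p] := by
      rwa [mul_comm k, mul_comm ℓ] at h2
    exact Nat.ModEq.cancel_left_of_coprime hcop h3
  · intro h
    have h1 : 1 + k * 2 ^ r ≡ 1 + ℓ * 2 ^ r [MOD p] := (h.mul_right _).add_left 1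
    exact Nat.modEq_zero_iff_dvd.1 (h1.trans (Nat.modEq_zero_iff_dvd.2 hd))

private lemma ell_exists (hp : p.Prime) (hodd : Odd p) (r : ℕ) :
    ∃ ℓ : ℕ, 0 < ℓ ∧ ℓ < p ∧ p ∣ 1 + ℓ * 2 ^ r := by
  haveI : Fact p.Prime := ⟨hp⟩
  have hp2 : ¬ (p ∣ 2) := by
    intro h
    have h1 := Nat.le_of_dvd (by norm_num) h
    have h2 := hp.two_le
    rw [Nat.odd_iff] at hodd
    omega
  have h20 : (2 : ZMod p) ≠ 0 := by
    have := (ZMod.natCast_eq_zero_iff 2 p).not.2 hp2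
    simpa using this
  have h2 : (2 : ZMod p) ^ r ≠ 0 := pow_ne_zero _ h20
  set u : ZMod p := -((2 : ZMod p) ^ r)⁻¹ with hu
  have hune : u ≠ 0 := by
    simp [hu, inv_ne_zero h2]
  refine ⟨u.val, ?_, u.val_lt, ?_⟩
  · rcases Nat.eq_zero_or_pos u.val with h | h
    · exact absurd ((ZMod.val_eq_zero u).1 h) hune
    · exact h
  · rw [← ZMod.natCast_eq_zero_iff]
    push_cast
    rw [ZMod.natCast_val, ZMod.cast_id]
    have : u * (2 : ZMod p) ^ r = -1 := by
      rw [hu, neg_mul, inv_mul_cancel₀ h2]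
    rw [this]
    ring

end ConnHelpers

/-- For `n = 2^r·p` (`p` an odd prime, `r ≥ 2`): every element of `A ∪ B` is odd;
there is a unique `0 < ℓ < p` with `p ∣ 1 + ℓ·2^r`; the residues `1 + ℓ·2^r` and
`1 + ℓ·2^r + n/2` are the only elements of `A ∪ B` divisible by `p`, they lie in
the same one of the two sets, and every other element of `A ∪ B` is coprime to
`n`.  In particular one of `A`, `B` consists of residues coprime to `n` while the
other contains exactly two residues divisible by `p`. -/
theorem connection_sets_divisibility (p r : ℕ) (hp : p.Prime) (hodd : Odd p)
    (hr : 2 ≤ r) (n : ℕ) [NeZero n] (hn : n = 2 ^ r * p) :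
    (∀ x ∈ connA n r p ∪ connB n r p, Odd x.val) ∧
    (∃! ℓ : ℕ, 0 < ℓ ∧ ℓ < p ∧ p ∣ 1 + ℓ * 2 ^ r) ∧
    (∀ ℓ : ℕ, 0 < ℓ → ℓ < p → p ∣ 1 + ℓ * 2 ^ r →
      (∀ x ∈ connA n r p ∪ connB n r p,
        p ∣ x.val ↔
          (x = ((1 + ℓ * 2 ^ r : ℕ) : ZMod n) ∨
           x = ((1 + ℓ * 2 ^ r + n / 2 : ℕ) : ZMod n))) ∧
      ((((1 + ℓ * 2 ^ r : ℕ) : ZMod n) ∈ connA n r p ∧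
          ((1 + ℓ * 2 ^ r + n / 2 : ℕ) : ZMod n) ∈ connA n r p) ∨
       (((1 + ℓ * 2 ^ r : ℕ) : ZMod n) ∈ connB n r p ∧
          ((1 + ℓ * 2 ^ r + n / 2 : ℕ) : ZMod n) ∈ connB n r p)) ∧
      (∀ x ∈ connA n r p ∪ connB n r p,
        x ≠ ((1 + ℓ * 2 ^ r : ℕ) : ZMod n) →
        x ≠ ((1 + ℓ * 2 ^ r + n / 2 : ℕ) : ZMod n) →
        Nat.Coprime x.val n)) ∧
    (((∀ x ∈ connA n r p, Nat.Coprime x.val n) ∧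
        ((connB n r p).filter fun x => p ∣ x.val).card = 2) ∨
     ((∀ x ∈ connB n r p, Nat.Coprime x.val n) ∧
        ((connA n r p).filter fun x => p ∣ x.val).card = 2)) := by
  have hp3 : 3 ≤ p := by
    have h2 := hp.two_le
    rw [Nat.odd_iff] at hodd
    omega
  rw [Nat.odd_iff] at hodd
  have hodd' : Odd p := Nat.odd_iff.2 hodd
  have hm : p = 2 * ((p - 1) / 2) + 1 := by omega
  have hdvd : ∀ a : ℕ, p ∣ ((a : ZMod n)).val ↔ p ∣ a := val_dvd_iff hn
  have hoddv : ∀ a : ℕ, Odd ((a : ZMod n)).val ↔ Odd a := val_odd_iff hr hn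
  have hcop : ∀ a : ℕ, Nat.Coprime ((a : ZMod n)).val n ↔ Odd a ∧ ¬ p ∣ a := fun a =>
    (val_coprime_iff a).trans (coprime_iff hp hr hn a)
  have h2r : (2 : ℕ) ∣ 2 ^ r := dvd_pow_self 2 (by omega)
  have hodd1 : ∀ k : ℕ, Odd (1 + k * 2 ^ r) := by
    intro k
    have : (2 : ℕ) ∣ k * 2 ^ r := Dvd.dvd.mul_left h2r k
    rw [Nat.odd_iff]; omega
  have hodd2 : ∀ k : ℕ, Odd (1 + k * 2 ^ r + n / 2) := by
    intro k
    have h3 : (2 : ℕ) ∣ k * 2 ^ r := Dvd.dvd.mul_left h2r k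
    have h4 := two_dvd_half hr hn
    rw [Nat.odd_iff]; omega
  have hph := p_dvd_half hr hn
  have hpd2 : ∀ k : ℕ, (p ∣ 1 + k * 2 ^ r + n / 2) ↔ p ∣ 1 + k * 2 ^ r := by
    intro k
    constructor
    · intro h
      have := Nat.dvd_sub h hph
      rwa [Nat.add_sub_cancel] at this
    · intro h
      exact Dvd.dvd.add h hph
  have hunion : ∀ x ∈ connA n r p ∪ connB n r p,
      ∃ k : ℕ, x = ((1 + k * 2 ^ r : ℕ) : ZMod n) ∨
        x = ((1 + k * 2 ^ r + n / 2 : ℕ) : ZMod n) := by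
    intro x hx
    rw [Finset.mem_union] at hx
    rcases hx with hx | hx
    · rcases (memA_iff x).1 hx with ⟨i, _, hxe⟩ | ⟨j, _, _, hxe⟩
      exacts [⟨i, Or.inl hxe⟩, ⟨j, Or.inr hxe⟩]
    · rcases (memB_iff hr hn x).1 hx with ⟨i, _, hxe⟩ | ⟨j, _, _, hxe⟩
      exacts [⟨p - i, Or.inl hxe⟩, ⟨p - j, Or.inr hxe⟩]
  obtain ⟨ℓ₀, hl0, hlp, hld⟩ := ell_exists hp hodd' r
  have hmod0 : ∀ k, p ∣ 1 + k * 2 ^ r ↔ k ≡ ℓ₀ [MOD p] := dvd_iff_modeq hp hodd' hld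
  -- the generic iff, for any valid ℓ
  have hiffL : ∀ ℓ : ℕ, p ∣ 1 + ℓ * 2 ^ r →
      ∀ x ∈ connA n r p ∪ connB n r p,
        p ∣ x.val ↔ (x = ((1 + ℓ * 2 ^ r : ℕ) : ZMod n) ∨
          x = ((1 + ℓ * 2 ^ r + n / 2 : ℕ) : ZMod n)) := by
    intro ℓ hd x hx
    have hmod : ∀ k, p ∣ 1 + k * 2 ^ r ↔ k ≡ ℓ [MOD p] := dvd_iff_modeq hp hodd' hd
    obtain ⟨k, hk | hk⟩ := hunion x hx <;> subst hk
    · rw [hdvd, hmod k]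
      constructor
      · intro h
        exact Or.inl ((cast_eq_iff hn k ℓ).2 h)
      · rintro (h | h)
        · exact (cast_eq_iff hn k ℓ).1 h
        · exact absurd h (cast_ne hodd' hr hn k ℓ)
    · rw [hdvd, hpd2 k, hmod k]
      constructor
      · intro h
        exact Or.inr ((cast_eq_iff2 hn k ℓ).2 h)
      · rintro (h | h)
        · exact absurd h.symm (cast_ne hodd' hr hn ℓ k)
        · exact (cast_eq_iff2 hn k ℓ).1 h
  -- memberships
  have hmemA : ∀ ℓ : ℕ, 0 < ℓ → ℓ ≤ (p - 1) / 2 →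
      ((1 + ℓ * 2 ^ r : ℕ) : ZMod n) ∈ connA n r p ∧
        ((1 + ℓ * 2 ^ r + n / 2 : ℕ) : ZMod n) ∈ connA n r p := by
    intro ℓ h1 h2
    exact ⟨(memA_iff _).2 (Or.inl ⟨ℓ, h2, rfl⟩),
      (memA_iff _).2 (Or.inr ⟨ℓ, h1, h2, rfl⟩)⟩
  have hmemB : ∀ ℓ : ℕ, (p - 1) / 2 < ℓ → ℓ < p →
      ((1 + ℓ * 2 ^ r : ℕ) : ZMod n) ∈ connB n r p ∧
        ((1 + ℓ * 2 ^ r + n / 2 : ℕ) : ZMod n) ∈ connB n r p := by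
    intro ℓ h1 h2
    have hple : p - ℓ ≤ (p - 1) / 2 := by omega
    have he : p - (p - ℓ) = ℓ := by omega
    constructor
    · refine (memB_iff hr hn _).2 (Or.inl ⟨p - ℓ, hple, ?_⟩)
      rw [he]
    · refine (memB_iff hr hn _).2 (Or.inr ⟨p - ℓ, by omega, hple, ?_⟩)
      rw [he]
  refine ⟨?_, ?_, ?_, ?_⟩
  · -- all odd
    intro x hx
    obtain ⟨k, hk | hk⟩ := hunion x hx
    · rw [hk]; exact (hoddv _).2 (hodd1 k)
    · rw [hk]; exact (hoddv _).2 (hodd2 k)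
  · -- unique ℓ
    refine ⟨ℓ₀, ⟨hl0, hlp, hld⟩, ?_⟩
    rintro k ⟨hk1, hk2, hk3⟩
    have h4 : k % p = ℓ₀ % p := (hmod0 k).1 hk3
    rwa [Nat.mod_eq_of_lt hk2, Nat.mod_eq_of_lt hlp] at h4
  · -- main part
    intro ℓ hl0' hlp' hld'
    refine ⟨hiffL ℓ hld', ?_, ?_⟩
    · rcases le_or_gt ℓ ((p - 1) / 2) with hle | hgt
      · exact Or.inl (hmemA ℓ hl0' hle)
      · exact Or.inr (hmemB ℓ hgt hlp')
    · intro x hx hne1 hne2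
      obtain ⟨k, hk | hk⟩ := hunion x hx <;> subst hk
      · refine (hcop _).2 ⟨hodd1 k, fun hdv => ?_⟩
        have := (hiffL ℓ hld' _ hx).1 ((hdvd _).2 hdv)
        tauto
      · refine (hcop _).2 ⟨hodd2 k, fun hdv => ?_⟩
        have := (hiffL ℓ hld' _ hx).1 ((hdvd _).2 hdv)
        tauto
  · -- final dichotomy
    have hne12 : ((1 + ℓ₀ * 2 ^ r : ℕ) : ZMod n) ≠ ((1 + ℓ₀ * 2 ^ r + n / 2 : ℕ) : ZMod n) :=
      cast_ne hodd' hr hn ℓ₀ ℓ₀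
    rcases le_or_gt ℓ₀ ((p - 1) / 2) with hle | hgt
    · -- divisible residues live in A; B is all coprime
      right
      obtain ⟨hA1, hA2⟩ := hmemA ℓ₀ hl0 hle
      constructor
      · intro x hxB
        have hnot : ∀ i, i ≤ (p - 1) / 2 → ¬ ((p - i) ≡ ℓ₀ [MOD p]) := by
          intro i hi hcon
          have h3 : (p - i) % p = ℓ₀ % p := hcon
          rcases Nat.eq_zero_or_pos i with rfl | hipos
          · rw [Nat.sub_zero, Nat.mod_self, Nat.mod_eq_of_lt hlp] at h3
            omega
          · rw [Nat.mod_eq_of_lt (by omega), Nat.mod_eq_of_lt hlp] at h3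
            omega
        rcases (memB_iff hr hn x).1 hxB with ⟨i, hi, hxe⟩ | ⟨j, hj1, hj2, hxe⟩
        · subst hxe
          exact (hcop _).2 ⟨hodd1 _, fun hdv => hnot i hi ((hmod0 _).1 hdv)⟩
        · subst hxe
          exact (hcop _).2 ⟨hodd2 _, fun hdv =>
            hnot j hj2 ((hmod0 _).1 ((hpd2 _).1 hdv))⟩
      · have hfe : (connA n r p).filter (fun x => p ∣ x.val) =
            {((1 + ℓ₀ * 2 ^ r : ℕ) : ZMod n), ((1 + ℓ₀ * 2 ^ r + n / 2 : ℕ) : ZMod n)} := by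
          ext x
          simp only [Finset.mem_filter, Finset.mem_insert, Finset.mem_singleton]
          constructor
          · rintro ⟨hxA, hdvx⟩
            exact (hiffL ℓ₀ hld x (Finset.mem_union_left _ hxA)).1 hdvx
          · rintro (rfl | rfl)
            · exact ⟨hA1, (hdvd _).2 hld⟩
            · exact ⟨hA2, (hdvd _).2 ((hpd2 ℓ₀).2 hld)⟩
        rw [hfe, Finset.card_pair hne12]
    · -- divisible residues live in B; A is all coprime
      left
      obtain ⟨hB1, hB2⟩ := hmemB ℓ₀ hgt hlp
      constructor
      · intro x hxA
        have hnot : ∀ i, i ≤ (p - 1) / 2 → ¬ (i ≡ ℓ₀ [MOD p]) := by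
          intro i hi hcon
          have h3 : i % p = ℓ₀ % p := hcon
          rw [Nat.mod_eq_of_lt (by omega), Nat.mod_eq_of_lt hlp] at h3
          omega
        rcases (memA_iff x).1 hxA with ⟨i, hi, hxe⟩ | ⟨j, hj1, hj2, hxe⟩
        · subst hxe
          exact (hcop _).2 ⟨hodd1 _, fun hdv => hnot i hi ((hmod0 _).1 hdv)⟩
        · subst hxe
          exact (hcop _).2 ⟨hodd2 _, fun hdv =>
            hnot j hj2 ((hmod0 _).1 ((hpd2 _).1 hdv))⟩
      · have hfe : (connB n r p).filter (fun x => p ∣ x.val) =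
            {((1 + ℓ₀ * 2 ^ r : ℕ) : ZMod n), ((1 + ℓ₀ * 2 ^ r + n / 2 : ℕ) : ZMod n)} := by
          ext x
          simp only [Finset.mem_filter, Finset.mem_insert, Finset.mem_singleton]
          constructor
          · rintro ⟨hxB, hdvx⟩
            exact (hiffL ℓ₀ hld x (Finset.mem_union_right _ hxB)).1 hdvx
          · rintro (rfl | rfl)
            · exact ⟨hB1, (hdvd _).2 hld⟩
            · exact ⟨hB2, (hdvd _).2 ((hpd2 ℓ₀).2 hld)⟩
        rw [hfe, Finset.card_pair hne12]
end

section
/- Let p be an odd prime, let r ≥ 2 be an integer, and let n = 2^r·p. Define A = {1 + i·2^r : 0 ≤ i ≤ (p−1)/2} ∪ {1 + j·2^r + n/2 : 1 ≤ j ≤ (p−1)/2} and B = {1 − i·2^r : 0 ≤ i ≤ (p−1)/2} ∪ {1 − j·2^r + n/2 : 1 ≤ j ≤ (p−1)/2} as subsets of ℤ/nℤ. Then there is no integer q with gcd(q, n) = 1 such that B = q·A as subsets of ℤ/nℤ, where q·A = {q·a : a ∈ A}. -/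
lemma aux_dvd (p r k : ℕ) [NeZero (2 ^ r * p)]
    (h : ((k * 2 ^ r : ℕ) : ZMod (2 ^ r * p)) = 0) : p ∣ k := by
  rw [ZMod.natCast_eq_zero_iff] at h
  rw [mul_comm k] at h
  exact (Nat.mul_dvd_mul_iff_left (pow_pos (by norm_num : (0:ℕ) < 2) r)).mp h

lemma aux_inj_le (p r : ℕ) [NeZero (2 ^ r * p)] {i j : ℕ} (hij : i ≤ j) (hj : j < p)
    (h : ((i * 2 ^ r : ℕ) : ZMod (2 ^ r * p)) = ((j * 2 ^ r : ℕ) : ZMod (2 ^ r * p))) :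
    i = j := by
  have h' : (((j - i) * 2 ^ r : ℕ) : ZMod (2 ^ r * p)) = 0 := by
    rw [Nat.sub_mul, Nat.cast_sub (Nat.mul_le_mul_right _ hij), h, sub_self]
  have hd := aux_dvd p r _ h'
  rcases Nat.eq_zero_or_pos (j - i) with h0 | h0
  · omega
  · have := Nat.le_of_dvd h0 hd; omega

lemma aux_inj (p r : ℕ) [NeZero (2 ^ r * p)] {i j : ℕ} (hi : i < p) (hj : j < p)
    (h : ((i * 2 ^ r : ℕ) : ZMod (2 ^ r * p)) = ((j * 2 ^ r : ℕ) : ZMod (2 ^ r * p))) :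
    i = j := by
  rcases le_total i j with hle | hle
  · exact aux_inj_le p r hle hj h
  · exact (aux_inj_le p r hle hi h.symm).symm

/-- For `n = 2^r·p` (`p` an odd prime, `r ≥ 2`), there is no integer `q` coprime
to `n` with `B = q·A` in `ℤ/nℤ`. -/
theorem conn_sets_not_multiplier_equivalent (p r : ℕ) (hp : p.Prime)
    (hodd : Odd p) (hr : 2 ≤ r) (n : ℕ) [NeZero n] (hn : n = 2 ^ r * p) :
    ¬ ∃ q : ℤ, Int.gcd q n = 1 ∧
        connB n r p = (connA n r p).image fun a => (q : ZMod n) * a := by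
  subst hn
  rintro ⟨q, hq, hB⟩
  obtain ⟨k, hk0⟩ := hodd
  have hp2 := hp.two_le
  have hk : p = 2 * k + 1 := by omega
  have hp3 : 3 ≤ p := by omega
  have hm1 : 1 ≤ (p - 1) / 2 := by omega
  have hmp : (p - 1) / 2 + 1 < p := by omega
  haveI : NeZero (2 ^ r) := ⟨by positivity⟩
  haveI : NeZero p := ⟨by omega⟩
  haveI := Fact.mk hp
  set φ := ZMod.castHom (dvd_mul_right (2 ^ r) p) (ZMod (2 ^ r)) with hφdef
  set ψ := ZMod.castHom (dvd_mul_left p (2 ^ r)) (ZMod p) with hψdef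
  -- power facts in ZMod (2^r)
  have h20 : (2 : ZMod (2 ^ r)) ^ r = 0 := by
    have := ZMod.natCast_self (2 ^ r)
    exact_mod_cast this
  have h1pow : (2 : ZMod (2 ^ r)) * 2 ^ (r - 1) = 2 ^ r := by
    rw [← pow_succ']
    congr 1
    omega
  have h2pow : (2 : ZMod (2 ^ r)) ^ (r - 1) * 2 ^ (r - 1) = 2 ^ (r - 2) * 2 ^ r := by
    rw [← pow_add, ← pow_add]
    congr 1
    omega
  have hcne : (2 : ZMod (2 ^ r)) ^ (r - 1) ≠ 0 := by
    intro h
    have h' : ((2 ^ (r - 1) : ℕ) : ZMod (2 ^ r)) = 0 := by exact_mod_cast h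
    rw [ZMod.natCast_eq_zero_iff] at h'
    have h1 := Nat.le_of_dvd (pow_pos (by norm_num) _) h'
    have h2 : (2:ℕ) ^ (r - 1) < 2 ^ r := Nat.pow_lt_pow_right (by norm_num) (by omega)
    omega
  have hne1 : (1 : ZMod (2 ^ r)) + 2 ^ (r - 1) ≠ 1 := by
    intro h
    apply hcne
    have h' : (1 : ZMod (2 ^ r)) + 2 ^ (r - 1) = 1 + 0 := by rw [h, add_zero]
    exact add_left_cancel h'
  have hsq : ((1 : ZMod (2 ^ r)) + 2 ^ (r - 1)) * (1 + 2 ^ (r - 1)) = 1 := by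
    calc ((1 : ZMod (2 ^ r)) + 2 ^ (r - 1)) * (1 + 2 ^ (r - 1))
        = 1 + 2 * 2 ^ (r - 1) + 2 ^ (r - 1) * 2 ^ (r - 1) := by ring
      _ = 1 + 2 ^ r + 2 ^ (r - 2) * 2 ^ r := by rw [h1pow, h2pow]
      _ = 1 := by rw [h20]; ring
  -- cast computations
  have hn2 : 2 ^ r * p / 2 = 2 ^ (r - 1) * p := by
    have h2r : (2:ℕ) ^ r = 2 * 2 ^ (r - 1) := by
      rw [← pow_succ']
      congr 1
      omega
    rw [h2r, mul_assoc, Nat.mul_div_cancel_left _ (by norm_num)]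
  have hzero : ∀ a : ℕ, ((a * 2 ^ r : ℕ) : ZMod (2 ^ r)) = 0 := by
    intro a
    push_cast
    rw [h20, mul_zero]
  have hone : ∀ i : ℕ, ((1 + i * 2 ^ r : ℕ) : ZMod (2 ^ r)) = 1 := by
    intro i
    push_cast
    rw [h20, mul_zero, add_zero]
  have hhalf : ((2 ^ r * p / 2 : ℕ) : ZMod (2 ^ r)) = 2 ^ (r - 1) := by
    rw [hn2, hk]
    push_cast
    linear_combination (k : ZMod (2 ^ r)) * h1pow + (k : ZMod (2 ^ r)) * h20
  have hψhalf : ((2 ^ r * p / 2 : ℕ) : ZMod p) = 0 := by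
    rw [hn2, ZMod.natCast_eq_zero_iff]
    exact dvd_mul_left p _
  have h2p : (2 : ZMod p) ≠ 0 := by
    intro h
    have h' : ((2:ℕ) : ZMod p) = 0 := by exact_mod_cast h
    rw [ZMod.natCast_eq_zero_iff] at h'
    have := Nat.le_of_dvd (by norm_num) h'
    omega
  have hune : ((q : ℤ) : ZMod p) ≠ 0 := by
    intro h
    rw [ZMod.intCast_zmod_eq_zero_iff_dvd] at h
    have hcq : IsCoprime q ((2 ^ r * p : ℕ) : ℤ) := Int.isCoprime_iff_gcd_eq_one.mpr hq
    have hdn : ((p : ℕ) : ℤ) ∣ ((2 ^ r * p : ℕ) : ℤ) := by push_cast; exact dvd_mul_left _ _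
    have := (hcq.isUnit_of_dvd' h hdn)
    rw [Int.isUnit_iff] at this
    omega
  -- φ-values of the elements
  have hφA1 : ∀ i : ℕ, φ ((1 + i * 2 ^ r : ℕ) : ZMod (2 ^ r * p)) = 1 := fun i => by
    rw [map_natCast, hone]
  have hφA2 : ∀ j : ℕ,
      φ ((1 + j * 2 ^ r + 2 ^ r * p / 2 : ℕ) : ZMod (2 ^ r * p)) = 1 + 2 ^ (r - 1) :=
    fun j => by rw [map_natCast, Nat.cast_add, hone, hhalf]
  have hφB1 : ∀ i : ℕ, φ (1 - ((i * 2 ^ r : ℕ) : ZMod (2 ^ r * p))) = 1 := fun i => by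
    rw [map_sub, map_one, map_natCast, hzero, sub_zero]
  have hφB2 : ∀ j : ℕ,
      φ (1 - ((j * 2 ^ r : ℕ) : ZMod (2 ^ r * p)) + ((2 ^ r * p / 2 : ℕ) : ZMod (2 ^ r * p)))
        = 1 + 2 ^ (r - 1) := fun j => by
    rw [map_add, map_sub, map_one, map_natCast, map_natCast, hzero, sub_zero, hhalf]
  -- q ∈ B
  have h1A : (1 : ZMod (2 ^ r * p)) ∈ connA (2 ^ r * p) r p := by
    unfold connA
    apply Finset.mem_union_left
    exact Finset.mem_image.mpr ⟨0, Finset.mem_range.mpr (by omega), by norm_num⟩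
  have hqB : ((q : ℤ) : ZMod (2 ^ r * p)) ∈ connB (2 ^ r * p) r p := by
    rw [hB]
    exact Finset.mem_image.mpr ⟨1, h1A, mul_one _⟩
  unfold connB at hqB
  rcases Finset.mem_union.mp hqB with hcase | hcase
  · -- case φ(q) = 1
    obtain ⟨i0, hi0, hq0⟩ := Finset.mem_image.mp hcase
    have hi0' := Finset.mem_range.mp hi0
    have hφq : φ ((q : ℤ) : ZMod (2 ^ r * p)) = 1 := by
      rw [← hq0]; exact hφB1 i0
    have hu : ((q : ℤ) : ZMod p) = 1 - (i0 : ZMod p) * 2 ^ r := by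
      have h := congrArg ψ hq0
      rw [map_sub, map_one, map_natCast, map_intCast] at h
      rw [← h]
      push_cast
      ring
    have hup : ((q : ℤ) : ZMod p) = 1 := by
      rcases Nat.eq_zero_or_pos i0 with h0 | h0
      · rw [hu, h0]; push_cast; ring
      · exfalso
        have hBf2 : (connB (2 ^ r * p) r p).filter (fun x => φ x = 1 + 2 ^ (r - 1))
            = (Finset.Icc 1 ((p - 1) / 2)).image
                (fun j => 1 - ((j * 2 ^ r : ℕ) : ZMod (2 ^ r * p))
                  + ((2 ^ r * p / 2 : ℕ) : ZMod (2 ^ r * p))) := by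
          unfold connB
          rw [Finset.filter_union,
            Finset.filter_false_of_mem (fun x hx => by
              obtain ⟨i, hi, rfl⟩ := Finset.mem_image.mp hx
              rw [hφB1]
              exact fun h => hne1 h.symm),
            Finset.filter_true_of_mem (fun x hx => by
              obtain ⟨j, hj, rfl⟩ := Finset.mem_image.mp hx
              exact hφB2 j),
            Finset.empty_union]
        have hAf2 : ((connA (2 ^ r * p) r p).image
              (fun a => ((q : ℤ) : ZMod (2 ^ r * p)) * a)).filter
              (fun x => φ x = 1 + 2 ^ (r - 1))
            = ((Finset.Icc 1 ((p - 1) / 2)).image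
                (fun j => ((1 + j * 2 ^ r + 2 ^ r * p / 2 : ℕ) : ZMod (2 ^ r * p)))).image
                (fun a => ((q : ℤ) : ZMod (2 ^ r * p)) * a) := by
          rw [Finset.filter_image]
          congr 1
          unfold connA
          rw [Finset.filter_union,
            Finset.filter_false_of_mem (fun x hx => by
              obtain ⟨i, hi, rfl⟩ := Finset.mem_image.mp hx
              rw [map_mul, hφq, hφA1, one_mul]
              exact fun h => hne1 h.symm),
            Finset.filter_true_of_mem (fun x hx => by
              obtain ⟨j, hj, rfl⟩ := Finset.mem_image.mp hx
              rw [map_mul, hφq, hφA2, one_mul]),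
            Finset.empty_union]
        rw [hB, hAf2] at hBf2
        have hyB : (1 - ((i0 * 2 ^ r : ℕ) : ZMod (2 ^ r * p))
              + ((2 ^ r * p / 2 : ℕ) : ZMod (2 ^ r * p)))
            ∈ (Finset.Icc 1 ((p - 1) / 2)).image
                (fun j => 1 - ((j * 2 ^ r : ℕ) : ZMod (2 ^ r * p))
                  + ((2 ^ r * p / 2 : ℕ) : ZMod (2 ^ r * p))) :=
          Finset.mem_image.mpr ⟨i0, Finset.mem_Icc.mpr ⟨h0, by omega⟩, rfl⟩
        rw [← hBf2] at hyB
        obtain ⟨a, ha, hfa⟩ := Finset.mem_image.mp hyB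
        obtain ⟨j, hj, rfl⟩ := Finset.mem_image.mp ha
        have hj' := Finset.mem_Icc.mp hj
        have h2 := congrArg ψ hfa
        simp only [map_mul, map_add, map_sub, map_one, map_natCast, map_intCast] at h2
        simp only [Nat.cast_add, hψhalf, add_zero] at h2
        push_cast at h2
        have h2' : ((q : ℤ) : ZMod p) * ((j : ZMod p) * 2 ^ r) = 0 := by
          linear_combination h2 - hu
        have hj0 : (j : ZMod p) = 0 := by
          rcases mul_eq_zero.mp h2' with h3 | h3
          · exact absurd h3 hune
          · rcases mul_eq_zero.mp h3 with h4 | h4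
            · exact h4
            · exact absurd h4 (pow_ne_zero _ h2p)
        rw [ZMod.natCast_eq_zero_iff] at hj0
        have := Nat.le_of_dvd (by omega) hj0
        omega
    -- now q ≡ 1 mod 2^r and mod p, so q ≡ 1 mod n
    have hq2 : ((q : ℤ) : ZMod (2 ^ r)) = 1 := by
      rw [← map_intCast φ q]
      exact hφq
    have hdvd2 : ((2 ^ r : ℕ) : ℤ) ∣ q - 1 := by
      rw [← ZMod.intCast_zmod_eq_zero_iff_dvd]
      push_cast
      rw [hq2, sub_self]
    have hdvdp : ((p : ℕ) : ℤ) ∣ q - 1 := by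
      rw [← ZMod.intCast_zmod_eq_zero_iff_dvd]
      push_cast
      rw [hup, sub_self]
    have hcop : IsCoprime ((2 ^ r : ℕ) : ℤ) ((p : ℕ) : ℤ) := by
      rw [Nat.isCoprime_iff_coprime]
      exact Nat.Coprime.pow_left r
        ((Nat.Prime.coprime_iff_not_dvd Nat.prime_two).mpr (by omega))
    have hdvdn : ((2 ^ r * p : ℕ) : ℤ) ∣ q - 1 := by
      have := hcop.mul_dvd hdvd2 hdvdp
      push_cast at this ⊢
      exact this
    have hQ1 : ((q : ℤ) : ZMod (2 ^ r * p)) = 1 := by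
      have h0 : ((q - 1 : ℤ) : ZMod (2 ^ r * p)) = 0 :=
        (ZMod.intCast_zmod_eq_zero_iff_dvd _ _).mpr hdvdn
      push_cast at h0
      linear_combination h0
    rw [hQ1] at hB
    simp only [one_mul, Finset.image_id'] at hB
    have hxB : (1 : ZMod (2 ^ r * p)) - ((1 * 2 ^ r : ℕ) : ZMod (2 ^ r * p))
        ∈ connB (2 ^ r * p) r p := by
      unfold connB
      apply Finset.mem_union_left
      exact Finset.mem_image.mpr ⟨1, Finset.mem_range.mpr (by omega), rfl⟩
    rw [hB] at hxB
    unfold connA at hxB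
    rcases Finset.mem_union.mp hxB with hx | hx
    · obtain ⟨i, hi, heq⟩ := Finset.mem_image.mp hx
      have hi' := Finset.mem_range.mp hi
      have h0 : (((i + 1) * 2 ^ r : ℕ) : ZMod (2 ^ r * p)) = 0 := by
        push_cast at heq ⊢
        linear_combination heq
      have hd := aux_dvd p r _ h0
      have := Nat.le_of_dvd (by omega) hd
      omega
    · obtain ⟨j, hj, heq⟩ := Finset.mem_image.mp hx
      have h1 := congrArg φ heq
      rw [hφA2, hφB1] at h1
      exact hne1 h1
  · -- case φ(q) = 1 + 2^(r-1) : cardinality contradiction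
    obtain ⟨j0, hj0, hq0⟩ := Finset.mem_image.mp hcase
    have hφq : φ ((q : ℤ) : ZMod (2 ^ r * p)) = 1 + 2 ^ (r - 1) := by
      rw [← hq0]; exact hφB2 j0
    have hBf1 : (connB (2 ^ r * p) r p).filter (fun x => φ x = 1)
        = (Finset.range ((p - 1) / 2 + 1)).image
            (fun i => 1 - ((i * 2 ^ r : ℕ) : ZMod (2 ^ r * p))) := by
      unfold connB
      rw [Finset.filter_union,
        Finset.filter_true_of_mem (fun x hx => by
          obtain ⟨i, hi, rfl⟩ := Finset.mem_image.mp hx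
          exact hφB1 i),
        Finset.filter_false_of_mem (fun x hx => by
          obtain ⟨j, hj, rfl⟩ := Finset.mem_image.mp hx
          rw [hφB2]
          exact hne1),
        Finset.union_empty]
    have hAf1 : ((connA (2 ^ r * p) r p).image
          (fun a => ((q : ℤ) : ZMod (2 ^ r * p)) * a)).filter (fun x => φ x = 1)
        = ((Finset.Icc 1 ((p - 1) / 2)).image
            (fun j => ((1 + j * 2 ^ r + 2 ^ r * p / 2 : ℕ) : ZMod (2 ^ r * p)))).image
            (fun a => ((q : ℤ) : ZMod (2 ^ r * p)) * a) := by
      rw [Finset.filter_image]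
      congr 1
      unfold connA
      rw [Finset.filter_union,
        Finset.filter_false_of_mem (fun x hx => by
          obtain ⟨i, hi, rfl⟩ := Finset.mem_image.mp hx
          rw [map_mul, hφq, hφA1, mul_one]
          exact hne1),
        Finset.filter_true_of_mem (fun x hx => by
          obtain ⟨j, hj, rfl⟩ := Finset.mem_image.mp hx
          rw [map_mul, hφq, hφA2]
          exact hsq),
        Finset.empty_union]
    rw [hB, hAf1] at hBf1
    have hcard1 : ((Finset.range ((p - 1) / 2 + 1)).image
        (fun i => 1 - ((i * 2 ^ r : ℕ) : ZMod (2 ^ r * p)))).card = (p - 1) / 2 + 1 := by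
      rw [Finset.card_image_of_injOn, Finset.card_range]
      intro i hi j hj hij
      have hi' := Finset.mem_range.mp (by exact hi)
      have hj' := Finset.mem_range.mp (by exact hj)
      have heq : ((i * 2 ^ r : ℕ) : ZMod (2 ^ r * p)) = ((j * 2 ^ r : ℕ) : ZMod (2 ^ r * p)) :=
        sub_right_injective hij
      exact aux_inj p r (by omega) (by omega) heq
    have hcard2 : (((Finset.Icc 1 ((p - 1) / 2)).image
          (fun j => ((1 + j * 2 ^ r + 2 ^ r * p / 2 : ℕ) : ZMod (2 ^ r * p)))).image
          (fun a => ((q : ℤ) : ZMod (2 ^ r * p)) * a)).card ≤ (p - 1) / 2 := by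
      calc (((Finset.Icc 1 ((p - 1) / 2)).image
            (fun j => ((1 + j * 2 ^ r + 2 ^ r * p / 2 : ℕ) : ZMod (2 ^ r * p)))).image
            (fun a => ((q : ℤ) : ZMod (2 ^ r * p)) * a)).card
          ≤ ((Finset.Icc 1 ((p - 1) / 2)).image
            (fun j => ((1 + j * 2 ^ r + 2 ^ r * p / 2 : ℕ) : ZMod (2 ^ r * p)))).card :=
            Finset.card_image_le
        _ ≤ (Finset.Icc 1 ((p - 1) / 2)).card := Finset.card_image_le
        _ = (p - 1) / 2 := by rw [Nat.card_Icc]; omega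
    have hcc := congrArg Finset.card hBf1
    rw [hcard1] at hcc
    omega
end
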